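/- Fix ε > 0 and an open set U ⊆ H. Then: (1) the set A_{U,ε} = { K ∈ K(H) : K ∩ U ≠ ∅ and the norm diameter of K ∩ U is at most ε } is a Borel subset of K(H) (in fact, the complement of a countable union of closed sets); and (2) the set { (K, f) ∈ K(H) × H : f ∈ D_{U,ε}(K) } is Borel in K(H) × H, where D_{U,ε}(K) = K \ U if K ∈ A_{U,ε} and D_{U,ε}(K) = K otherwise. -/
import Mathlib


noncomputable section

open scoped Classical

/-- `H = [-1,1]^ℕ`, the product of countably many copies of `[-1,1]`, with the
product topology (and its Borel σ-algebra). -/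
abbrev H : Type := ℕ → Set.Icc (-1 : ℝ) 1

/-- The supremum distance `‖f − g‖_∞ = sup_n |f(n) − g(n)|` on `H`. -/
noncomputable def normDist (f g : H) : ℝ := ⨆ n, |(f n : ℝ) - (g n : ℝ)|

/-- The norm diameter of `S ⊆ H`: `sup {‖f − g‖_∞ : f, g ∈ S}`. -/
noncomputable def normDiam (S : Set H) : ℝ :=
  sSup {d : ℝ | ∃ f ∈ S, ∃ g ∈ S, d = normDist f g}

/-- `S ⊆ H` is norm separable: separable w.r.t. the metric `(f,g) ↦ ‖f − g‖_∞`. -/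
def NormSeparable (S : Set H) : Prop :=
  ∃ D : Set H, D.Countable ∧ D ⊆ S ∧ ∀ f ∈ S, ∀ δ : ℝ, 0 < δ → ∃ g ∈ D, normDist f g < δ

/-- `K(H)`: the space of nonempty compact subsets of `H`. -/
def KH : Type := {K : Set H // IsCompact K ∧ K.Nonempty}

/-- The Vietoris topology on `K(H)`, generated by the sets
`{K : K ∩ U ≠ ∅}` and `{K : K ⊆ U}` for `U ⊆ H` open. -/
instance : TopologicalSpace KH :=
  TopologicalSpace.generateFrom
    ({S : Set KH | ∃ U : Set H, IsOpen U ∧ S = {K : KH | (K.val ∩ U).Nonempty}} ∪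
     {S : Set KH | ∃ U : Set H, IsOpen U ∧ S = {K : KH | K.val ⊆ U}})

/-- The Borel σ-algebra of the Vietoris topology on `K(H)`. -/
instance : MeasurableSpace KH := borel KH

/-- The derivation `D_{U,ε}`: remove `U` from `K` if `K ∩ U` is nonempty of norm diameter
at most `ε`; otherwise leave `K` unchanged. -/
noncomputable def Dderiv (U : Set H) (ε : ℝ) (K : Set H) : Set H :=
  if (K ∩ U).Nonempty ∧ normDiam (K ∩ U) ≤ ε then K \ U else K

-- auxiliary lemmas

instance : BorelSpace KH := ⟨rfl⟩

lemma isOpen_KH_subsets {V : Set H} (hV : IsOpen V) : IsOpen {K : KH | K.val ⊆ V} :=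
  TopologicalSpace.isOpen_generateFrom_of_mem (Or.inr ⟨V, hV, rfl⟩)

lemma isOpen_KH_hits {V : Set H} (hV : IsOpen V) : IsOpen {K : KH | (K.val ∩ V).Nonempty} :=
  TopologicalSpace.isOpen_generateFrom_of_mem (Or.inl ⟨V, hV, rfl⟩)

lemma abs_sub_le_two (f g : H) (n : ℕ) : |(f n : ℝ) - (g n : ℝ)| ≤ 2 := by
  have h1 := (f n).2; have h2 := (g n).2
  simp only [Set.mem_Icc] at h1 h2
  rw [abs_sub_le_iff]; constructor <;> linarith

lemma bddAbove_normDist (f g : H) : BddAbove (Set.range fun n => |(f n : ℝ) - (g n : ℝ)|) :=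
  ⟨2, by rintro x ⟨n, rfl⟩; exact abs_sub_le_two f g n⟩

lemma normDist_le_two (f g : H) : normDist f g ≤ 2 :=
  ciSup_le fun n => abs_sub_le_two f g n

lemma lt_normDist_iff {f g : H} {ε : ℝ} : ε < normDist f g ↔ ∃ n, ε < |(f n : ℝ) - (g n : ℝ)| := by
  rw [normDist, lt_ciSup_iff (bddAbove_normDist f g)]

lemma abs_le_normDist (f g : H) (n : ℕ) : |(f n : ℝ) - (g n : ℝ)| ≤ normDist f g :=
  le_ciSup (bddAbove_normDist f g) n

lemma lt_normDiam_iff {S : Set H} (hS : S.Nonempty) {ε : ℝ} :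
    ε < normDiam S ↔ ∃ f ∈ S, ∃ g ∈ S, ε < normDist f g := by
  rw [normDiam, lt_csSup_iff ?bdd ?ne]
  case bdd => exact ⟨2, by rintro d ⟨f, _, g, _, rfl⟩; exact normDist_le_two f g⟩
  case ne => obtain ⟨f, hf⟩ := hS; exact ⟨_, f, hf, f, hf, rfl⟩
  constructor
  · rintro ⟨d, ⟨f, hf, g, hg, rfl⟩, hd⟩; exact ⟨f, hf, g, hg, hd⟩
  · rintro ⟨f, hf, g, hg, hd⟩; exact ⟨_, ⟨f, hf, g, hg, rfl⟩, hd⟩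

lemma normDist_le_normDiam {S : Set H} {f g : H} (hf : f ∈ S) (hg : g ∈ S) :
    normDist f g ≤ normDiam S :=
  le_csSup ⟨2, by rintro d ⟨f, _, g, _, rfl⟩; exact normDist_le_two f g⟩ ⟨f, hf, g, hg, rfl⟩

lemma isClosed_KH_pair {R : Set (H × H)} (hR : IsClosed R) :
    IsClosed {K : KH | ∃ f ∈ K.val, ∃ g ∈ K.val, (f, g) ∈ R} := by
  rw [← isOpen_compl_iff, isOpen_iff_forall_mem_open]
  intro K hK
  have hsub : K.val ×ˢ K.val ⊆ Rᶜ := by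
    rintro ⟨f, g⟩ ⟨hf, hg⟩ hfg
    exact hK ⟨f, hf, g, hg, hfg⟩
  obtain ⟨u, v, hu, hv, hKu, hKv, huv⟩ :=
    generalized_tube_lemma K.2.1 K.2.1 hR.isOpen_compl hsub
  refine ⟨{K' : KH | K'.val ⊆ u ∩ v}, ?_, isOpen_KH_subsets (hu.inter hv),
    fun x hx => ⟨hKu hx, hKv hx⟩⟩
  rintro K' hK' ⟨f, hf, g, hg, hfg⟩
  exact huv ⟨(hK' hf).1, (hK' hg).2⟩ hfg

lemma isClosed_graph_KH : IsClosed {p : KH × H | p.2 ∈ p.1.val} := by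
  rw [← isOpen_compl_iff, isOpen_iff_forall_mem_open]
  rintro ⟨K, f⟩ hf
  obtain ⟨W, V, hW, hV, hKW, hfV, hdisj⟩ := K.2.1.separation_of_notMem hf
  refine ⟨{K' : KH | K'.val ⊆ W} ×ˢ V, ?_, (isOpen_KH_subsets hW).prod hV, hKW, hfV⟩
  rintro ⟨K', g⟩ ⟨hK', hg⟩ (hmem : g ∈ K'.val)
  exact hdisj.le_bot ⟨hK' hmem, hg⟩


/-- **Lemma 4(i).** For `ε > 0` and `U ⊆ H` open: the set `A_{U,ε}` is Borel in `K(H)`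
(in fact the complement of a countable union of closed sets) and the graph-type set
`{(K, f) : f ∈ D_{U,ε}(K)}` is Borel in `K(H) × H`. -/
theorem borel_Dderiv (ε : ℝ) (hε : 0 < ε) (U : Set H) (hU : IsOpen U) :
    (MeasurableSet {K : KH | (K.val ∩ U).Nonempty ∧ normDiam (K.val ∩ U) ≤ ε} ∧
      ∃ C : ℕ → Set KH, (∀ n, IsClosed (C n)) ∧
        {K : KH | (K.val ∩ U).Nonempty ∧ normDiam (K.val ∩ U) ≤ ε} = (⋃ n, C n)ᶜ) ∧
    MeasurableSet {p : KH × H | p.2 ∈ Dderiv U ε p.1.val} := by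
  set A : Set KH := {K : KH | (K.val ∩ U).Nonempty ∧ normDiam (K.val ∩ U) ≤ ε} with hA
  -- decompose U into countably many closed sets
  have hGδ : IsGδ Uᶜ := hU.isClosed_compl.isGδ
  obtain ⟨W, hWopen, hWeq⟩ := isGδ_iff_eq_iInter_nat.mp hGδ
  set F : ℕ → Set H := fun n => (W n)ᶜ with hF
  have hFclosed : ∀ n, IsClosed (F n) := fun n => (hWopen n).isClosed_compl
  have hFU : U = ⋃ n, F n := by
    have : U = (⋂ n, W n)ᶜ := by rw [← hWeq, compl_compl]
    rw [this, Set.compl_iInter]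
  -- the closed relations
  set R : ℕ × ℕ × ℕ × ℚ → Set (H × H) := fun i =>
    {p : H × H | p.1 ∈ F i.1 ∧ p.2 ∈ F i.2.1 ∧ (i.2.2.2 : ℝ) ≤ |(p.1 i.2.2.1 : ℝ) - (p.2 i.2.2.1 : ℝ)|}
    with hR
  have hRclosed : ∀ i, IsClosed (R i) := by
    rintro ⟨m, m', n, q⟩
    have hc : Continuous fun p : H × H => |(p.1 n : ℝ) - (p.2 n : ℝ)| := by
      apply Continuous.abs
      exact (continuous_subtype_val.comp ((continuous_apply n).comp continuous_fst)).sub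
        (continuous_subtype_val.comp ((continuous_apply n).comp continuous_snd))
    exact ((hFclosed m).preimage continuous_fst).inter
      (((hFclosed m').preimage continuous_snd).inter (isClosed_le continuous_const hc))
  set C' : ℕ × ℕ × ℕ × ℚ → Set KH := fun i =>
    if ε < (i.2.2.2 : ℝ) then {K : KH | ∃ f ∈ K.val, ∃ g ∈ K.val, (f, g) ∈ R i}
    else {K : KH | (K.val ∩ U).Nonempty}ᶜ with hC'
  have hC'closed : ∀ i, IsClosed (C' i) := by
    intro i
    rw [hC']
    dsimp only
    split_ifs
    · exact isClosed_KH_pair (hRclosed i)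
    · exact (isOpen_KH_hits hU).isClosed_compl
  have key2 : Aᶜ = ⋃ i, C' i := by
    ext K
    simp only [Set.mem_iUnion, Set.mem_compl_iff, hA, Set.mem_setOf_eq, not_and_or]
    constructor
    · rintro (hne | hdiam)
      · refine ⟨(0, 0, 0, 0), ?_⟩
        simp only [hC']
        rw [if_neg (show ¬ ε < ((0:ℚ):ℝ) by push_cast; linarith)]
        exact hne
      · rw [not_le] at hdiam
        have hne : (K.val ∩ U).Nonempty := by
          by_contra hcon
          rw [Set.not_nonempty_iff_eq_empty] at hcon
          rw [hcon, normDiam] at hdiam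
          have : {d : ℝ | ∃ f ∈ (∅ : Set H), ∃ g ∈ (∅ : Set H), d = normDist f g} = ∅ := by
            ext d; simp
          rw [this, Real.sSup_empty] at hdiam
          linarith
        obtain ⟨f, hf, g, hg, hfg⟩ := (lt_normDiam_iff hne).mp hdiam
        obtain ⟨n, hn⟩ := lt_normDist_iff.mp hfg
        obtain ⟨m, hm⟩ := Set.mem_iUnion.mp (hFU ▸ hf.2)
        obtain ⟨m', hm'⟩ := Set.mem_iUnion.mp (hFU ▸ hg.2)
        obtain ⟨q, hq1, hq2⟩ := exists_rat_btwn hn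
        refine ⟨(m, m', n, q), ?_⟩
        simp only [hC']
        rw [if_pos hq1]
        exact ⟨f, hf.1, g, hg.1, hm, hm', le_of_lt hq2⟩
    · rintro ⟨⟨m, m', n, q⟩, hK⟩
      simp only [hC'] at hK
      split_ifs at hK with hq
      · obtain ⟨f, hfK, g, hgK, hfF, hgF, hle⟩ := hK
        have hfU : f ∈ U := hFU ▸ Set.mem_iUnion.mpr ⟨m, hfF⟩
        have hgU : g ∈ U := hFU ▸ Set.mem_iUnion.mpr ⟨m', hgF⟩
        right
        rw [not_le]
        refine (lt_normDiam_iff (⟨f, ⟨hfK, hfU⟩⟩ : (K.val ∩ U).Nonempty)).mpr ⟨f, ⟨hfK, hfU⟩, g, ⟨hgK, hgU⟩, ?_⟩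
        exact lt_of_lt_of_le (lt_of_lt_of_le hq hle) (abs_le_normDist f g n)
      · exact Or.inl hK
  have key : A = (⋃ i, C' i)ᶜ := by rw [← key2, compl_compl]
  -- reindex over ℕ
  set e : ℕ × ℕ × ℕ × ℚ ≃ ℕ := Denumerable.eqv (ℕ × ℕ × ℕ × ℚ) with he
  have hreindex : (⋃ n, C' (e.symm n)) = ⋃ i, C' i := e.symm.surjective.iUnion_comp C'
  have hAmeas : MeasurableSet A := by
    rw [key]
    exact (MeasurableSet.iUnion fun i => (hC'closed i).measurableSet).compl
  refine ⟨⟨hAmeas, fun n => C' (e.symm n), fun n => hC'closed _, by rw [hreindex]; exact key⟩, ?_⟩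
  -- part 2
  have hsplit : {p : KH × H | p.2 ∈ Dderiv U ε p.1.val} =
      ((Prod.fst ⁻¹' A) ∩ ({p : KH × H | p.2 ∈ p.1.val} ∩ Prod.snd ⁻¹' Uᶜ)) ∪
      ((Prod.fst ⁻¹' A)ᶜ ∩ {p : KH × H | p.2 ∈ p.1.val}) := by
    ext ⟨K, f⟩
    by_cases h : (K.val ∩ U).Nonempty ∧ normDiam (K.val ∩ U) ≤ ε
    · simp [Dderiv, if_pos h, hA, h, Set.mem_diff, and_comm]
    · simp [Dderiv, if_neg h, hA, h]
  rw [hsplit]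
  have hG : MeasurableSet {p : KH × H | p.2 ∈ p.1.val} := isClosed_graph_KH.measurableSet
  exact ((hAmeas.preimage measurable_fst).inter
      (hG.inter (hU.measurableSet.compl.preimage measurable_snd))).union
    (((hAmeas.preimage measurable_fst).compl).inter hG)
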